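/- Let p : ℚ[k₁, g₂, g₃] → ℚ[k₁, g₂] be the ℚ-algebra homomorphism with g₃ ↦ 0 (identity on k₁, g₂), let φ : ℚ[k₁, k₂, g₂, q] → ℚ[k₁, g₂] be the ℚ-algebra homomorphism with k₂ ↦ 2g₂ − k₁² and q ↦ −g₂(k₁² − 4g₂) (identity on k₁, g₂), and let A := ℚ[k₁, g₂, g₃] ×_{ℚ[k₁,g₂]} ℚ[k₁, k₂, g₂, q] be the fiber product along p and φ. Let I ⊆ A be the ideal generated by the element (0, q² + g₂²(2k₂ + k₁²)(k₁² − 4g₂)) (which lies in A since both components map to 0 in ℚ[k₁, g₂]). Then the quotient A/I is isomorphic as a ℚ-algebra to ℚ[K₁, K₂, G₂, G₃, Q]/J, where J is the ideal generated by the three polynomials G₃(K₂ − 2G₂ + K₁²), G₃(Q + G₂(K₁² − 4G₂)), and Q² + G₂²(2K₂ + K₁²)(K₁² − 4G₂), via the map sending K₁ ↦ (k₁, k₁), G₂ ↦ (g₂, g₂), G₃ ↦ (g₃, 0), K₂ ↦ (2g₂ − k₁², k₂), Q ↦ (−g₂(k₁² − 4g₂), q). -/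

import Mathlib

open MvPolynomial

/-- `p : ℚ[k₁, g₂, g₃] → ℚ[k₁, g₂]`, the identity on `k₁, g₂` and `g₃ ↦ 0`
(variables: `k₁ = X 0`, `g₂ = X 1`, `g₃ = X 2` in the source, `k₁ = X 0`, `g₂ = X 1` in
the target). -/
noncomputable def pMap : MvPolynomial (Fin 3) ℚ →ₐ[ℚ] MvPolynomial (Fin 2) ℚ :=
  aeval ![X 0, X 1, 0]

/-- `φ : ℚ[k₁, k₂, g₂, q] → ℚ[k₁, g₂]`, the identity on `k₁, g₂`, with
`k₂ ↦ 2g₂ − k₁²` and `q ↦ −g₂(k₁² − 4g₂)` (variables: `k₁ = X 0`, `k₂ = X 1`,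
`g₂ = X 2`, `q = X 3` in the source). -/
noncomputable def phiMap : MvPolynomial (Fin 4) ℚ →ₐ[ℚ] MvPolynomial (Fin 2) ℚ :=
  aeval ![X 0, 2 * X 1 - X 0 ^ 2, X 1, -(X 1) * (X 0 ^ 2 - 4 * X 1)]

/-- The fiber product `A = ℚ[k₁,g₂,g₃] ×_{ℚ[k₁,g₂]} ℚ[k₁,k₂,g₂,q]` along `p` and `φ`,
as a subalgebra of the product. -/
noncomputable def fibA : Subalgebra ℚ (MvPolynomial (Fin 3) ℚ × MvPolynomial (Fin 4) ℚ) :=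
  AlgHom.equalizer (pMap.comp (AlgHom.fst ℚ _ _)) (phiMap.comp (AlgHom.snd ℚ _ _))

/-- `(0, q² + g₂²(2k₂+k₁²)(k₁²−4g₂))` lies in the fiber product. -/
lemma mem0 : ((0 : MvPolynomial (Fin 3) ℚ),
    (X 3 ^ 2 + X 2 ^ 2 * (2 * X 1 + X 0 ^ 2) * (X 0 ^ 2 - 4 * X 2) :
      MvPolynomial (Fin 4) ℚ)) ∈ fibA := by
  rw [fibA, AlgHom.mem_equalizer, AlgHom.comp_apply, AlgHom.comp_apply, AlgHom.fst_apply,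
    AlgHom.snd_apply]
  rw [map_zero, map_add, map_mul, map_mul, map_sub, map_add, map_mul, map_pow, map_pow, map_pow,
    map_mul, map_ofNat, map_ofNat]
  unfold phiMap
  simp only [aeval_X]
  simp only [Matrix.cons_val]
  ring

/-- `(k₁, k₁)` lies in the fiber product. -/
lemma mem1 : ((X 0 : MvPolynomial (Fin 3) ℚ), (X 0 : MvPolynomial (Fin 4) ℚ)) ∈ fibA := by
  show pMap (X 0) = phiMap (X 0)
  simp [pMap, phiMap, bind₁_X_right, map_ofNat]

/-- `(g₂, g₂)` lies in the fiber product. -/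
lemma mem2 : ((X 1 : MvPolynomial (Fin 3) ℚ), (X 2 : MvPolynomial (Fin 4) ℚ)) ∈ fibA := by
  show pMap (X 1) = phiMap (X 2)
  simp [pMap, phiMap, bind₁_X_right, map_ofNat]

/-- `(g₃, 0)` lies in the fiber product. -/
lemma mem3 : ((X 2 : MvPolynomial (Fin 3) ℚ), (0 : MvPolynomial (Fin 4) ℚ)) ∈ fibA := by
  show pMap (X 2) = phiMap 0
  simp [pMap, phiMap, bind₁_X_right, map_ofNat]

/-- `(2g₂ − k₁², k₂)` lies in the fiber product. -/
lemma mem4 : ((2 * X 1 - X 0 ^ 2 : MvPolynomial (Fin 3) ℚ),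
    (X 1 : MvPolynomial (Fin 4) ℚ)) ∈ fibA := by
  rw [fibA, AlgHom.mem_equalizer, AlgHom.comp_apply, AlgHom.comp_apply, AlgHom.fst_apply,
    AlgHom.snd_apply]
  rw [map_sub, map_mul, map_pow, map_ofNat]
  unfold pMap phiMap
  rw [aeval_X, aeval_X, aeval_X]
  rfl

/-- `(−g₂(k₁² − 4g₂), q)` lies in the fiber product. -/
lemma mem5 : ((-(X 1) * (X 0 ^ 2 - 4 * X 1) : MvPolynomial (Fin 3) ℚ),
    (X 3 : MvPolynomial (Fin 4) ℚ)) ∈ fibA := by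
  rw [fibA, AlgHom.mem_equalizer, AlgHom.comp_apply, AlgHom.comp_apply, AlgHom.fst_apply,
    AlgHom.snd_apply]
  rw [map_mul, map_neg, map_sub, map_mul, map_pow, map_ofNat]
  unfold pMap phiMap
  rw [aeval_X, aeval_X, aeval_X]
  rfl

set_option maxHeartbeats 1000000

/-! ### Auxiliary machinery -/

/-- Quotient trick: an endomorphism fixing all variables modulo `K` fixes everything mod `K`. -/
lemma fp_trick {n : ℕ} (τ : MvPolynomial (Fin n) ℚ →ₐ[ℚ] MvPolynomial (Fin n) ℚ)
    (K : Ideal (MvPolynomial (Fin n) ℚ)) (h : ∀ i, τ (X i) - X i ∈ K)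
    (P : MvPolynomial (Fin n) ℚ) : τ P - P ∈ K := by
  have hc : (Ideal.Quotient.mkₐ ℚ K).comp τ = Ideal.Quotient.mkₐ ℚ K := by
    apply MvPolynomial.algHom_ext
    intro i
    simpa [Ideal.Quotient.mkₐ_eq_mk, Ideal.Quotient.eq] using h i
  have h2 : Ideal.Quotient.mk K (τ P) = Ideal.Quotient.mk K P := by
    simpa using congrArg (fun f => f P) hc
  exact (Ideal.Quotient.eq).1 h2

noncomputable def F1 : MvPolynomial (Fin 5) ℚ →ₐ[ℚ] MvPolynomial (Fin 3) ℚ :=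
  aeval ![X 0, 2 * X 1 - X 0 ^ 2, X 1, X 2, -(X 1) * (X 0 ^ 2 - 4 * X 1)]

noncomputable def F2 : MvPolynomial (Fin 5) ℚ →ₐ[ℚ] MvPolynomial (Fin 4) ℚ :=
  aeval ![X 0, X 1, X 2, 0, X 3]

noncomputable def rSec : MvPolynomial (Fin 3) ℚ →ₐ[ℚ] MvPolynomial (Fin 5) ℚ :=
  aeval ![X 0, X 2, X 3]

noncomputable def sSec : MvPolynomial (Fin 4) ℚ →ₐ[ℚ] MvPolynomial (Fin 5) ℚ :=
  aeval ![X 0, X 1, X 2, X 4]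

noncomputable def iota : MvPolynomial (Fin 2) ℚ →ₐ[ℚ] MvPolynomial (Fin 3) ℚ :=
  aeval ![X 0, X 1]

lemma F1_r : F1.comp rSec = AlgHom.id ℚ _ := by
  apply MvPolynomial.algHom_ext; intro i
  fin_cases i <;> simp [F1, rSec]

lemma F2_s : F2.comp sSec = AlgHom.id ℚ _ := by
  apply MvPolynomial.algHom_ext; intro i
  fin_cases i <;> simp [F2, sSec]

lemma F1_s : F1.comp sSec = iota.comp phiMap := by
  apply MvPolynomial.algHom_ext; intro i
  fin_cases i <;> simp [F1, sSec, iota, phiMap, map_ofNat]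

noncomputable def fElem : Fin 5 → fibA :=
  ![⟨(X 0, X 0), mem1⟩, ⟨(2 * X 1 - X 0 ^ 2, X 1), mem4⟩, ⟨(X 1, X 2), mem2⟩,
    ⟨(X 2, 0), mem3⟩, ⟨(-(X 1) * (X 0 ^ 2 - 4 * X 1), X 3), mem5⟩]

noncomputable def Fmap : MvPolynomial (Fin 5) ℚ →ₐ[ℚ] fibA := aeval fElem

lemma Fval (P : MvPolynomial (Fin 5) ℚ) :
    (Fmap P : MvPolynomial (Fin 3) ℚ × MvPolynomial (Fin 4) ℚ) = (F1 P, F2 P) := by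
  have h : fibA.val.comp Fmap = F1.prod F2 := by
    apply MvPolynomial.algHom_ext; intro i
    fin_cases i <;> simp [Fmap, fElem, F1, F2, AlgHom.prod]
  simpa [AlgHom.prod] using congrArg (fun f => f P) h

lemma Fmap_surj : Function.Surjective Fmap := by
  rintro ⟨⟨a, b⟩, hab⟩
  have hab' : pMap a = phiMap b := hab
  have h1 : ∀ i, (iota.comp pMap) (X i) - X i ∈
      (Ideal.span {X 2} : Ideal (MvPolynomial (Fin 3) ℚ)) := by
    intro i; fin_cases i
    · simp [iota, pMap]
    · simp [iota, pMap]
    · show (iota.comp pMap) (X 2) - X 2 ∈ _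
      have : (iota.comp pMap) (X 2) - X 2 = -(X 2 : MvPolynomial (Fin 3) ℚ) := by
        simp [iota, pMap]
      rw [this]
      exact neg_mem (Ideal.subset_span rfl)
  have h2 := fp_trick _ _ h1 a
  rw [Ideal.mem_span_singleton] at h2
  obtain ⟨c, hc⟩ := h2
  set P := sSec b + X 3 * rSec (-c) with hP
  refine ⟨P, Subtype.ext ?_⟩
  rw [Fval]
  have e1 : F1 (sSec b) = iota (phiMap b) := congrArg (fun f => f b) F1_s
  have e2 : F2 (sSec b) = b := congrArg (fun f => f b) F2_s
  have e3 : F1 (rSec (-c)) = -c := congrArg (fun f => f (-c)) F1_r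
  have e4 : F1 (X 3 : MvPolynomial (Fin 5) ℚ) = X 2 := by simp [F1]
  have e5 : F2 (X 3 : MvPolynomial (Fin 5) ℚ) = 0 := by simp [F2]
  have hF1 : F1 P = a := by
    rw [hP, map_add, map_mul, e1, e3, e4, ← hab']
    have : iota (pMap a) - a = X 2 * c := hc
    linear_combination this
  have hF2 : F2 P = b := by
    rw [hP, map_add, map_mul, e2, e5]
    ring
  rw [hF1, hF2]

lemma ker_sub (P : MvPolynomial (Fin 5) ℚ) (h1 : F1 P = 0) (h2 : F2 P = 0) :
    P ∈ Ideal.span {X 3 * (X 1 - 2 * X 2 + X 0 ^ 2),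
      X 3 * (X 4 + X 2 * (X 0 ^ 2 - 4 * X 2))} := by
  -- step 1: P is divisible by X 3
  have t2 : ∀ i, (sSec.comp F2) (X i) - X i ∈
      (Ideal.span {X 3} : Ideal (MvPolynomial (Fin 5) ℚ)) := by
    intro i; fin_cases i
    · simp [sSec, F2]
    · simp [sSec, F2]
    · simp [sSec, F2]
    · show (sSec.comp F2) (X 3) - X 3 ∈ _
      have : (sSec.comp F2) (X 3) - X 3 = -(X 3 : MvPolynomial (Fin 5) ℚ) := by
        simp [sSec, F2]
      rw [this]; exact neg_mem (Ideal.subset_span rfl)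
    · simp [sSec, F2]
  have hP3 := fp_trick _ _ t2 P
  have hs0 : (sSec.comp F2) P = 0 := by
    simp [AlgHom.comp_apply, h2]
  rw [hs0, zero_sub] at hP3
  have hP3' : P ∈ (Ideal.span {X 3} : Ideal (MvPolynomial (Fin 5) ℚ)) := by
    simpa using neg_mem hP3
  rw [Ideal.mem_span_singleton] at hP3'
  obtain ⟨C, hC⟩ := hP3'
  -- step 2: F1 C = 0
  have e4 : F1 (X 3 : MvPolynomial (Fin 5) ℚ) = X 2 := by simp [F1]
  have hF1C : F1 C = 0 := by
    have hm : (X 2 : MvPolynomial (Fin 3) ℚ) * F1 C = 0 := by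
      rw [← e4, ← map_mul, ← hC, h1]
    rcases mul_eq_zero.1 hm with h | h
    · exact absurd h (X_ne_zero 2)
    · exact h
  -- step 3: C ∈ span of the two relations
  have t1 : ∀ i, (rSec.comp F1) (X i) - X i ∈
      (Ideal.span {X 1 - 2 * X 2 + X 0 ^ 2, X 4 + X 2 * (X 0 ^ 2 - 4 * X 2)} :
        Ideal (MvPolynomial (Fin 5) ℚ)) := by
    intro i; fin_cases i
    · simp [rSec, F1]
    · show (rSec.comp F1) (X 1) - X 1 ∈ _
      have : (rSec.comp F1) (X 1) - X 1 =
          -((X 1 : MvPolynomial (Fin 5) ℚ) - 2 * X 2 + X 0 ^ 2) := by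
        simp [rSec, F1, map_ofNat]; ring
      rw [this]
      exact neg_mem (Ideal.subset_span (Set.mem_insert _ _))
    · simp [rSec, F1]
    · simp [rSec, F1]
    · show (rSec.comp F1) (X 4) - X 4 ∈ _
      have : (rSec.comp F1) (X 4) - X 4 =
          -((X 4 : MvPolynomial (Fin 5) ℚ) + X 2 * (X 0 ^ 2 - 4 * X 2)) := by
        simp [rSec, F1, map_ofNat]; ring
      rw [this]
      exact neg_mem (Ideal.subset_span (Set.mem_insert_of_mem _ rfl))
  have hCK := fp_trick _ _ t1 C
  have hr0 : (rSec.comp F1) C = 0 := by simp [AlgHom.comp_apply, hF1C]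
  rw [hr0, zero_sub] at hCK
  have hCK' : C ∈ (Ideal.span {X 1 - 2 * X 2 + X 0 ^ 2,
      X 4 + X 2 * (X 0 ^ 2 - 4 * X 2)} : Ideal (MvPolynomial (Fin 5) ℚ)) := by
    simpa using neg_mem hCK
  rw [Ideal.mem_span_pair] at hCK'
  obtain ⟨A, B, hAB⟩ := hCK'
  have hPeq : P = A * (X 3 * (X 1 - 2 * X 2 + X 0 ^ 2)) +
      B * (X 3 * (X 4 + X 2 * (X 0 ^ 2 - 4 * X 2))) := by
    rw [hC, ← hAB]; ring
  rw [hPeq]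
  exact add_mem (Ideal.mul_mem_left _ _ (Ideal.subset_span (Set.mem_insert _ _)))
    (Ideal.mul_mem_left _ _ (Ideal.subset_span (Set.mem_insert_of_mem _ rfl)))

/-- Let `I ⊆ A` be the ideal generated by `(0, q² + g₂²(2k₂+k₁²)(k₁²−4g₂))` and `J` the
ideal of `ℚ[K₁,K₂,G₂,G₃,Q]` generated by `G₃(K₂ − 2G₂ + K₁²)`, `G₃(Q + G₂(K₁² − 4G₂))`
and `Q² + G₂²(2K₂ + K₁²)(K₁² − 4G₂)` (variables `K₁ = X 0, K₂ = X 1, G₂ = X 2,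
G₃ = X 3, Q = X 4`).  Then `A/I ≅ ℚ[K₁,K₂,G₂,G₃,Q]/J` as `ℚ`-algebras, via
`K₁ ↦ (k₁,k₁)`, `K₂ ↦ (2g₂−k₁², k₂)`, `G₂ ↦ (g₂,g₂)`, `G₃ ↦ (g₃,0)`,
`Q ↦ (−g₂(k₁²−4g₂), q)`. -/
theorem quotient_of_fiber_product
    (I : Ideal fibA)
    (hI : I = Ideal.span
      {(⟨(0, X 3 ^ 2 + X 2 ^ 2 * (2 * X 1 + X 0 ^ 2) * (X 0 ^ 2 - 4 * X 2)), mem0⟩ :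
        fibA)})
    (J : Ideal (MvPolynomial (Fin 5) ℚ))
    (hJ : J = Ideal.span
      {X 3 * (X 1 - 2 * X 2 + X 0 ^ 2),
       X 3 * (X 4 + X 2 * (X 0 ^ 2 - 4 * X 2)),
       X 4 ^ 2 + X 2 ^ 2 * (2 * X 1 + X 0 ^ 2) * (X 0 ^ 2 - 4 * X 2)}) :
    ∃ e : (MvPolynomial (Fin 5) ℚ ⧸ J) ≃ₐ[ℚ] (fibA ⧸ I),
      e (Ideal.Quotient.mk J (X 0)) = Ideal.Quotient.mk I ⟨(X 0, X 0), mem1⟩ ∧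
      e (Ideal.Quotient.mk J (X 1)) =
        Ideal.Quotient.mk I ⟨(2 * X 1 - X 0 ^ 2, X 1), mem4⟩ ∧
      e (Ideal.Quotient.mk J (X 2)) = Ideal.Quotient.mk I ⟨(X 1, X 2), mem2⟩ ∧
      e (Ideal.Quotient.mk J (X 3)) = Ideal.Quotient.mk I ⟨(X 2, 0), mem3⟩ ∧
      e (Ideal.Quotient.mk J (X 4)) =
        Ideal.Quotient.mk I ⟨(-(X 1) * (X 0 ^ 2 - 4 * X 1), X 3), mem5⟩ := by
  have hGsurj : Function.Surjective ((Ideal.Quotient.mkₐ ℚ I).comp Fmap) :=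
    (Ideal.Quotient.mkₐ_surjective ℚ I).comp Fmap_surj
  -- F of the third generator
  have hFg3 : Fmap (X 4 ^ 2 + X 2 ^ 2 * (2 * X 1 + X 0 ^ 2) * (X 0 ^ 2 - 4 * X 2)) =
      ⟨(0, X 3 ^ 2 + X 2 ^ 2 * (2 * X 1 + X 0 ^ 2) * (X 0 ^ 2 - 4 * X 2)), mem0⟩ := by
    apply Subtype.ext
    rw [Fval]
    refine Prod.ext ?_ ?_
    · simp [F1, map_ofNat]; ring
    · simp [F2, map_ofNat]
  have hFj1 : Fmap (X 3 * (X 1 - 2 * X 2 + X 0 ^ 2)) = 0 := by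
    apply Subtype.ext
    rw [Fval]
    have : ((0 : fibA) : MvPolynomial (Fin 3) ℚ × MvPolynomial (Fin 4) ℚ) = (0, 0) := rfl
    rw [this]
    refine Prod.ext ?_ ?_
    · simp [F1, map_ofNat]
    · simp [F2, map_ofNat]
  have hFj2 : Fmap (X 3 * (X 4 + X 2 * (X 0 ^ 2 - 4 * X 2))) = 0 := by
    apply Subtype.ext
    rw [Fval]
    have : ((0 : fibA) : MvPolynomial (Fin 3) ℚ × MvPolynomial (Fin 4) ℚ) = (0, 0) := rfl
    rw [this]
    refine Prod.ext ?_ ?_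
    · simp [F1, map_ofNat]
    · simp [F2, map_ofNat]
  have hker : J = RingHom.ker ((Ideal.Quotient.mkₐ ℚ I).comp Fmap) := by
    apply le_antisymm
    · rw [hJ, Ideal.span_le]
      rintro x (rfl | rfl | rfl)
      · show ((Ideal.Quotient.mkₐ ℚ I).comp Fmap) _ = 0
        simp [hFj1]
      · show ((Ideal.Quotient.mkₐ ℚ I).comp Fmap) _ = 0
        simp [hFj2]
      · show ((Ideal.Quotient.mkₐ ℚ I).comp Fmap) _ = 0
        simp only [AlgHom.comp_apply, hFg3, Ideal.Quotient.mkₐ_eq_mk]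
        rw [Ideal.Quotient.eq_zero_iff_mem, hI]
        exact Ideal.subset_span rfl
    · intro x hx
      have hx' : Fmap x ∈ I := by
        have : ((Ideal.Quotient.mkₐ ℚ I).comp Fmap) x = 0 := hx
        simpa [Ideal.Quotient.mkₐ_eq_mk, Ideal.Quotient.eq_zero_iff_mem] using this
      rw [hI, Ideal.mem_span_singleton] at hx'
      obtain ⟨z, hz⟩ := hx'
      obtain ⟨Z, hZ⟩ := Fmap_surj z
      obtain ⟨g3p, hg3p⟩ : ∃ g3p : MvPolynomial (Fin 5) ℚ,
        g3p = X 4 ^ 2 + X 2 ^ 2 * (2 * X 1 + X 0 ^ 2) * (X 0 ^ 2 - 4 * X 2) := ⟨_, rfl⟩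
      have hker0 : Fmap (x - g3p * Z) = 0 := by
        rw [map_sub, map_mul, hg3p, hFg3, hZ, ← hz, sub_self]
      have hcomp := Fval (x - g3p * Z)
      rw [hker0] at hcomp
      have h1 : F1 (x - g3p * Z) = 0 := by
        have := congrArg Prod.fst hcomp.symm
        simpa using this
      have h2 : F2 (x - g3p * Z) = 0 := by
        have := congrArg Prod.snd hcomp.symm
        simpa using this
      have hmem := ker_sub _ h1 h2
      have hsub : Ideal.span {X 3 * (X 1 - 2 * X 2 + X 0 ^ 2),
          X 3 * (X 4 + X 2 * (X 0 ^ 2 - 4 * X 2))} ≤ J := by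
        rw [hJ]
        apply Ideal.span_mono
        intro y hy
        rcases hy with rfl | rfl
        · exact Set.mem_insert _ _
        · exact Set.mem_insert_of_mem _ (Set.mem_insert _ _)
      have hg3J : g3p * Z ∈ J := by
        apply Ideal.mul_mem_right
        rw [hJ, hg3p]
        exact Ideal.subset_span (Set.mem_insert_of_mem _ (Set.mem_insert_of_mem _ rfl))
      have : x = (x - g3p * Z) + g3p * Z := by ring
      rw [this]
      exact add_mem (hsub hmem) hg3J
  have happ : ∀ P : MvPolynomial (Fin 5) ℚ,
      ((Ideal.quotientEquivAlgOfEq ℚ hker).trans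
        (Ideal.quotientKerAlgEquivOfSurjective hGsurj)) (Ideal.Quotient.mk J P)
      = Ideal.Quotient.mk I (Fmap P) := by
    intro P
    rw [AlgEquiv.trans_apply, Ideal.quotientEquivAlgOfEq_mk,
      Ideal.quotientKerAlgEquivOfSurjective_mk]
    rfl
  refine ⟨(Ideal.quotientEquivAlgOfEq ℚ hker).trans
    (Ideal.quotientKerAlgEquivOfSurjective hGsurj), ?_, ?_, ?_, ?_, ?_⟩ <;>
  · rw [happ]
    congr 1
    simp [Fmap, fElem]
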